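/- (Change-of-variables representation of the partial outer bound.) For every α > 0, the following two sets of pairs (R_p, R_c) coincide: (i) the set of pairs with R_p ≥ 0, R_c ≥ 0 for which there exist PSD matrices Q_p ((n_pt+n_ct)×(n_pt+n_ct)) and Σ_cc (n_ct×n_ct) with Tr(Q_p)+Tr(Σ_cc) ≤ P_p + α·P_c, R_p ≤ logdet(I + G_α Q_p G_α† + (1/α) H_cp Σ_cc H_cp†) − logdet(I + (1/α) H_cp Σ_cc H_cp†), and R_c ≤ logdet(I + (1/α) H_cc Σ_cc H_cc†); and (ii) the set of pairs with R_p ≥ 0, R_c ≥ 0 for which there exist PSD matrices Σ_p (n_pt×n_pt), Σ_cp, Σ_cc (n_ct×n_ct) and a complex n_pt×n_ct matrix Q such that Σ_pnet = [[Σ_p, Q],[Q†, Σ_cp]] is PSD, Tr(Σ_p) + α·Tr(Σ_cp) + α·Tr(Σ_cc) ≤ P_p + α·P_c, R_p ≤ logdet(I + G Σ_pnet G† + H_cp Σ_cc H_cp†) − logdet(I + H_cp Σ_cc H_cp†), and R_c ≤ logdet(I + H_cc Σ_cc H_cc†). -/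

import Mathlib

open Matrix Filter
open scoped ComplexOrder

noncomputable section

/-- `Mat m n` : complex `m × n` matrix. -/
abbrev Mat (m n : ℕ) := Matrix (Fin m) (Fin n) ℂ

/-- `LD M = log det (I + M)` (real part of the determinant). -/
def LD {ι : Type*} [Fintype ι] [DecidableEq ι] (M : Matrix ι ι ℂ) : ℝ :=
  Real.log ((1 + M).det.re)

/-- real trace. -/
def rTr {ι : Type*} [Fintype ι] (M : Matrix ι ι ℂ) : ℝ := M.trace.re

/-- `G = [H_pp  H_cp]`. -/
def Gmat {npt nct npr : ℕ} (Hpp : Mat npr npt) (Hcp : Mat npr nct) :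
    Matrix (Fin npr) (Fin npt ⊕ Fin nct) ℂ :=
  fromCols Hpp Hcp

/-- `G_α = [H_pp  H_cp/√α]`. -/
def Galpha {npt nct npr : ℕ} (Hpp : Mat npr npt) (Hcp : Mat npr nct) (α : ℝ) :
    Matrix (Fin npr) (Fin npt ⊕ Fin nct) ℂ :=
  fromCols Hpp (((Real.sqrt α : ℂ))⁻¹ • Hcp)

/-- The achievable region `R_in`. -/
def Rin {npt nct npr ncr : ℕ} (Hpp : Mat npr npt) (Hcp : Mat npr nct) (Hcc : Mat ncr nct)
    (Pp Pc : ℝ) : Set (ℝ × ℝ) :=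
  closure (convexHull ℝ
    {R : ℝ × ℝ | 0 ≤ R.1 ∧ 0 ≤ R.2 ∧
      ∃ (Sp : Mat npt npt) (Scp Scc : Mat nct nct) (Q : Mat npt nct),
        Sp.PosSemidef ∧ Scp.PosSemidef ∧ Scc.PosSemidef ∧
        (fromBlocks Sp Q Qᴴ Scp).PosSemidef ∧
        rTr Sp ≤ Pp ∧ rTr Scp + rTr Scc ≤ Pc ∧
        R.1 ≤ LD (Gmat Hpp Hcp * fromBlocks Sp Q Qᴴ Scp * (Gmat Hpp Hcp)ᴴ
                  + Hcp * Scc * Hcpᴴ)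
              - LD (Hcp * Scc * Hcpᴴ) ∧
        R.2 ≤ LD (Hcc * Scc * Hccᴴ)})

/-- The partial outer bound region `R_part,out^α`. -/
def Rpart {npt nct npr ncr : ℕ} (Hpp : Mat npr npt) (Hcp : Mat npr nct) (Hcc : Mat ncr nct)
    (Pp Pc : ℝ) (α : ℝ) : Set (ℝ × ℝ) :=
  closure (convexHull ℝ
    {R : ℝ × ℝ | 0 ≤ R.1 ∧ 0 ≤ R.2 ∧
      ∃ (Qp : Matrix (Fin npt ⊕ Fin nct) (Fin npt ⊕ Fin nct) ℂ) (Scc : Mat nct nct),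
        Qp.PosSemidef ∧ Scc.PosSemidef ∧
        rTr Qp + rTr Scc ≤ Pp + α * Pc ∧
        R.1 ≤ LD (Galpha Hpp Hcp α * Qp * (Galpha Hpp Hcp α)ᴴ
                  + ((α : ℂ))⁻¹ • (Hcp * Scc * Hcpᴴ))
              - LD (((α : ℂ))⁻¹ • (Hcp * Scc * Hcpᴴ)) ∧
        R.2 ≤ LD (((α : ℂ))⁻¹ • (Hcc * Scc * Hccᴴ))})

/-- Tuples in `R_ach,rate` (no power constraints). -/
def RachRate {npt nct npr ncr : ℕ} (Hpp : Mat npr npt) (Hcp : Mat npr nct) (Hcc : Mat ncr nct)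
    (Rp Rc : ℝ) (Sp : Mat npt npt) (Scp Scc : Mat nct nct) (Q : Mat npt nct) : Prop :=
  0 ≤ Rp ∧ 0 ≤ Rc ∧ Sp.PosSemidef ∧ Scp.PosSemidef ∧ Scc.PosSemidef ∧
  (fromBlocks Sp Q Qᴴ Scp).PosSemidef ∧
  Rp ≤ LD (Gmat Hpp Hcp * fromBlocks Sp Q Qᴴ Scp * (Gmat Hpp Hcp)ᴴ + Hcp * Scc * Hcpᴴ)
        - LD (Hcp * Scc * Hcpᴴ) ∧
  Rc ≤ LD (Hcc * Scc * Hccᴴ)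

/-- The Lagrangian `L`. -/
def Lfun {npt nct : ℕ} (Pp Pc μ Rp Rc : ℝ) (Sp : Mat npt npt) (Scp Scc : Mat nct nct)
    (l1 l2 : ℝ) : ℝ :=
  μ * Rp + Rc - l1 * (rTr Sp - Pp) - l2 * (rTr Scp + rTr Scc - Pc)

/-- The Lagrangian `L₁`. -/
def L1fun {npt nct : ℕ} (Pp Pc μ Rp Rc : ℝ) (Sp : Mat npt npt) (Scp Scc : Mat nct nct)
    (l α : ℝ) : ℝ :=
  μ * Rp + Rc - l * (rTr Sp + α * rTr Scp + α * rTr Scc - Pp - α * Pc)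

/-- `K = [0  H_cc/√α]`. -/
def Kmat (npt : ℕ) {nct ncr : ℕ} (Hcc : Mat ncr nct) (α : ℝ) :
    Matrix (Fin ncr) (Fin npt ⊕ Fin nct) ℂ :=
  fromCols 0 (((Real.sqrt α : ℂ))⁻¹ • Hcc)

/-- `K̄ = [[H_pp, H_cp/√α],[0, H_cc/√α]]`. -/
def Kbar {npt nct npr ncr : ℕ} (Hpp : Mat npr npt) (Hcp : Mat npr nct) (Hcc : Mat ncr nct)
    (α : ℝ) : Matrix (Fin npr ⊕ Fin ncr) (Fin npt ⊕ Fin nct) ℂ :=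
  fromBlocks Hpp (((Real.sqrt α : ℂ))⁻¹ • Hcp) 0 (((Real.sqrt α : ℂ))⁻¹ • Hcc)

/-- The region `R₁^α` (licensed user encoded first). -/
def R1reg {npt nct npr ncr : ℕ} (Hpp : Mat npr npt) (Hcp : Mat npr nct) (Hcc : Mat ncr nct)
    (Pp Pc : ℝ) (α : ℝ) : Set (ℝ × ℝ) :=
  closure (convexHull ℝ
    {R : ℝ × ℝ | 0 ≤ R.1 ∧ 0 ≤ R.2 ∧
      ∃ Qp Qc : Matrix (Fin npt ⊕ Fin nct) (Fin npt ⊕ Fin nct) ℂ,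
        Qp.PosSemidef ∧ Qc.PosSemidef ∧ rTr Qp + rTr Qc ≤ Pp + α * Pc ∧
        R.1 ≤ LD (Galpha Hpp Hcp α * Qp * (Galpha Hpp Hcp α)ᴴ
                  + Galpha Hpp Hcp α * Qc * (Galpha Hpp Hcp α)ᴴ)
              - LD (Galpha Hpp Hcp α * Qc * (Galpha Hpp Hcp α)ᴴ) ∧
        R.2 ≤ LD (Kmat npt Hcc α * Qc * (Kmat npt Hcc α)ᴴ)})

/-- The region `R₂^α` (cognitive user encoded first). -/
def R2reg {npt nct npr ncr : ℕ} (Hpp : Mat npr npt) (Hcp : Mat npr nct) (Hcc : Mat ncr nct)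
    (Pp Pc : ℝ) (α : ℝ) : Set (ℝ × ℝ) :=
  closure (convexHull ℝ
    {R : ℝ × ℝ | 0 ≤ R.1 ∧ 0 ≤ R.2 ∧
      ∃ Qp Qc : Matrix (Fin npt ⊕ Fin nct) (Fin npt ⊕ Fin nct) ℂ,
        Qp.PosSemidef ∧ Qc.PosSemidef ∧ rTr Qp + rTr Qc ≤ Pp + α * Pc ∧
        R.1 ≤ LD (Galpha Hpp Hcp α * Qp * (Galpha Hpp Hcp α)ᴴ) ∧
        R.2 ≤ LD (Kmat npt Hcc α * Qp * (Kmat npt Hcc α)ᴴ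
                  + Kmat npt Hcc α * Qc * (Kmat npt Hcc α)ᴴ)
              - LD (Kmat npt Hcc α * Qp * (Kmat npt Hcc α)ᴴ)})

/-- The dirty-paper-coding region `D^α`. -/
def Dreg {npt nct npr ncr : ℕ} (Hpp : Mat npr npt) (Hcp : Mat npr nct) (Hcc : Mat ncr nct)
    (Pp Pc : ℝ) (α : ℝ) : Set (ℝ × ℝ) :=
  closure (convexHull ℝ
    (R1reg Hpp Hcp Hcc Pp Pc α ∪ R2reg Hpp Hcp Hcc Pp Pc α))

/-- `Σ_z = [[I, Q_z],[Q_z†, I]]`. -/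
def Sigmaz {npr ncr : ℕ} (Qz : Mat npr ncr) :
    Matrix (Fin npr ⊕ Fin ncr) (Fin npr ⊕ Fin ncr) ℂ :=
  fromBlocks 1 Qz Qzᴴ 1

/-- The outer bound region `R_out^{α,Σ_z}`. -/
def Rout {npt nct npr ncr : ℕ} (Hpp : Mat npr npt) (Hcp : Mat npr nct) (Hcc : Mat ncr nct)
    (Pp Pc : ℝ) (α : ℝ) (Qz : Mat npr ncr) : Set (ℝ × ℝ) :=
  closure (convexHull ℝ
    {R : ℝ × ℝ | 0 ≤ R.1 ∧ 0 ≤ R.2 ∧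
      ∃ Qp Qc : Matrix (Fin npt ⊕ Fin nct) (Fin npt ⊕ Fin nct) ℂ,
        Qp.PosSemidef ∧ Qc.PosSemidef ∧ rTr Qp + rTr Qc ≤ Pp + α * Pc ∧
        R.1 ≤ LD (Galpha Hpp Hcp α * Qp * (Galpha Hpp Hcp α)ᴴ
                  + Galpha Hpp Hcp α * Qc * (Galpha Hpp Hcp α)ᴴ)
              - LD (Galpha Hpp Hcp α * Qc * (Galpha Hpp Hcp α)ᴴ) ∧
        R.2 ≤ Real.log ((Sigmaz Qz + Kbar Hpp Hcp Hcc α * Qc * (Kbar Hpp Hcp Hcc α)ᴴ).det.re)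
              - Real.log ((Sigmaz Qz).det.re)})

set_option linter.unusedSectionVars false

section Aux
variable {m n : Type*} [Fintype m] [Fintype n] [DecidableEq m] [DecidableEq n]

lemma aux_trace_fromBlocks (A : Matrix m m ℂ) (B : Matrix m n ℂ) (C : Matrix n m ℂ)
    (D : Matrix n n ℂ) : (fromBlocks A B C D).trace = A.trace + D.trace := by
  simp [Matrix.trace, Fintype.sum_sum_type, fromBlocks, Matrix.diag]

lemma aux_smul_psd {M : Matrix n n ℂ} (hM : M.PosSemidef) {r : ℝ} (hr : 0 ≤ r) :
    ((r : ℂ) • M).PosSemidef := by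
  have h : ((r : ℂ) • M) = ((Real.sqrt r : ℂ) • (1 : Matrix n n ℂ)) * M *
      ((Real.sqrt r : ℂ) • (1 : Matrix n n ℂ))ᴴ := by
    rw [conjTranspose_smul, conjTranspose_one]
    simp [smul_mul_assoc, mul_smul_comm, smul_smul, Complex.star_def, Complex.conj_ofReal,
      ← Complex.ofReal_mul, Real.mul_self_sqrt hr]
  rw [h]
  exact hM.mul_mul_conjTranspose_same _

lemma aux_toBlocks11_psd {M : Matrix (m ⊕ n) (m ⊕ n) ℂ} (hM : M.PosSemidef) :
    M.toBlocks₁₁.PosSemidef := by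
  have h : M.toBlocks₁₁ = M.submatrix Sum.inl Sum.inl := rfl
  rw [h]; exact hM.submatrix _

lemma aux_toBlocks22_psd {M : Matrix (m ⊕ n) (m ⊕ n) ℂ} (hM : M.PosSemidef) :
    M.toBlocks₂₂.PosSemidef := by
  have h : M.toBlocks₂₂ = M.submatrix Sum.inr Sum.inr := rfl
  rw [h]; exact hM.submatrix _

lemma aux_toBlocks21 {M : Matrix (m ⊕ n) (m ⊕ n) ℂ} (hM : M.IsHermitian) :
    M.toBlocks₂₁ = M.toBlocks₁₂ᴴ := by
  ext i j
  have h := congrFun (congrFun hM (Sum.inr i)) (Sum.inl j)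
  simpa [toBlocks₂₁, toBlocks₁₂, conjTranspose_apply] using h.symm

end Aux

theorem statement2 {npt nct npr ncr : ℕ}
    (hnpt : 0 < npt) (hnct : 0 < nct) (hnpr : 0 < npr) (hncr : 0 < ncr)
    (Hpp : Mat npr npt) (Hcp : Mat npr nct) (Hcc : Mat ncr nct)
    (Pp Pc : ℝ) (hPp : 0 < Pp) (hPc : 0 < Pc) (α : ℝ) (hα : 0 < α) :
    {R : ℝ × ℝ | 0 ≤ R.1 ∧ 0 ≤ R.2 ∧
      ∃ (Qp : Matrix (Fin npt ⊕ Fin nct) (Fin npt ⊕ Fin nct) ℂ) (Scc : Mat nct nct),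
        Qp.PosSemidef ∧ Scc.PosSemidef ∧
        rTr Qp + rTr Scc ≤ Pp + α * Pc ∧
        R.1 ≤ LD (Galpha Hpp Hcp α * Qp * (Galpha Hpp Hcp α)ᴴ
                  + ((α : ℂ))⁻¹ • (Hcp * Scc * Hcpᴴ))
              - LD (((α : ℂ))⁻¹ • (Hcp * Scc * Hcpᴴ)) ∧
        R.2 ≤ LD (((α : ℂ))⁻¹ • (Hcc * Scc * Hccᴴ))} =
    {R : ℝ × ℝ | 0 ≤ R.1 ∧ 0 ≤ R.2 ∧
      ∃ (Sp : Mat npt npt) (Scp Scc : Mat nct nct) (Q : Mat npt nct),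
        Sp.PosSemidef ∧ Scp.PosSemidef ∧ Scc.PosSemidef ∧
        (fromBlocks Sp Q Qᴴ Scp).PosSemidef ∧
        rTr Sp + α * rTr Scp + α * rTr Scc ≤ Pp + α * Pc ∧
        R.1 ≤ LD (Gmat Hpp Hcp * fromBlocks Sp Q Qᴴ Scp * (Gmat Hpp Hcp)ᴴ
                  + Hcp * Scc * Hcpᴴ)
              - LD (Hcp * Scc * Hcpᴴ) ∧
        R.2 ≤ LD (Hcc * Scc * Hccᴴ)} := by
  have hsa : (0 : ℝ) ≤ α := hα.le
  have hαC : (α : ℂ) ≠ 0 := by exact_mod_cast hα.ne'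
  set c : ℂ := (Real.sqrt α : ℂ) with hcdef
  have hsqrt : Real.sqrt α ≠ 0 := by positivity
  have hcne : c ≠ 0 := by simpa [hcdef] using Complex.ofReal_ne_zero.mpr hsqrt
  have hccα : c * c = (α : ℂ) := by
    rw [hcdef, ← Complex.ofReal_mul, Real.mul_self_sqrt hsa]
  have hcstar : star c = c := by simp [hcdef, Complex.star_def, Complex.conj_ofReal]
  set Dm : Matrix (Fin npt ⊕ Fin nct) (Fin npt ⊕ Fin nct) ℂ :=
    fromBlocks 1 0 0 (c • 1) with hDm
  set Dm' : Matrix (Fin npt ⊕ Fin nct) (Fin npt ⊕ Fin nct) ℂ :=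
    fromBlocks 1 0 0 (c⁻¹ • 1) with hDm'
  have hDD' : Dm * Dm' = 1 := by
    rw [hDm, hDm', fromBlocks_multiply, ← fromBlocks_one]
    congr 1 <;> simp [smul_smul, mul_inv_cancel₀ hcne, inv_mul_cancel₀ hcne]
  have hD'D : Dm' * Dm = 1 := by
    rw [hDm, hDm', fromBlocks_multiply, ← fromBlocks_one]
    congr 1 <;> simp [smul_smul, mul_inv_cancel₀ hcne, inv_mul_cancel₀ hcne]
  have hD'herm : Dm'ᴴ = Dm' := by
    rw [hDm', fromBlocks_conjTranspose]
    congr 1 <;> simp [conjTranspose_smul, star_inv₀, hcstar]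
  have hDherm : Dmᴴ = Dm := by
    rw [hDm, fromBlocks_conjTranspose]
    congr 1 <;> simp [conjTranspose_smul, hcstar]
  have hGa : Galpha Hpp Hcp α = Gmat Hpp Hcp * Dm' := by
    rw [Gmat, hDm', fromCols_mul_fromBlocks]
    simp [Galpha, hcdef, mul_smul_comm]
  have h1 : ∀ M : Matrix (Fin npt ⊕ Fin nct) (Fin npt ⊕ Fin nct) ℂ,
      Dm' * (Dm * M * Dm) * Dm' = M := by
    intro M
    calc Dm' * (Dm * M * Dm) * Dm' = (Dm' * Dm) * M * (Dm * Dm') := by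
          simp only [Matrix.mul_assoc]
      _ = M := by rw [hD'D, hDD', Matrix.one_mul, Matrix.mul_one]
  have h2 : ∀ M : Matrix (Fin npt ⊕ Fin nct) (Fin npt ⊕ Fin nct) ℂ,
      Dm * (Dm' * M * Dm') * Dm = M := by
    intro M
    calc Dm * (Dm' * M * Dm') * Dm = (Dm * Dm') * M * (Dm' * Dm) := by
          simp only [Matrix.mul_assoc]
      _ = M := by rw [hD'D, hDD', Matrix.one_mul, Matrix.mul_one]
  have key : ∀ M : Matrix (Fin npt ⊕ Fin nct) (Fin npt ⊕ Fin nct) ℂ,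
      Galpha Hpp Hcp α * (Dm * M * Dm) * (Galpha Hpp Hcp α)ᴴ
        = Gmat Hpp Hcp * M * (Gmat Hpp Hcp)ᴴ := by
    intro M
    rw [hGa, conjTranspose_mul, hD'herm]
    calc Gmat Hpp Hcp * Dm' * (Dm * M * Dm) * (Dm' * (Gmat Hpp Hcp)ᴴ)
        = Gmat Hpp Hcp * (Dm' * (Dm * M * Dm) * Dm') * (Gmat Hpp Hcp)ᴴ := by
          simp only [Matrix.mul_assoc]
      _ = _ := by rw [h1]
  have hDMD : ∀ (Sp : Mat npt npt) (Q : Mat npt nct) (Q' : Mat nct npt) (Scp : Mat nct nct),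
      Dm * fromBlocks Sp Q Q' Scp * Dm
        = fromBlocks Sp (c • Q) (c • Q') ((α : ℂ) • Scp) := by
    intro Sp Q Q' Scp
    rw [hDm, fromBlocks_multiply, fromBlocks_multiply]
    congr 1 <;> simp [Matrix.smul_mul, Matrix.mul_smul, smul_smul, hccα]
  have hrTr_smul : ∀ {k : ℕ} (r : ℝ) (M : Mat k k), rTr ((r : ℂ) • M) = r * rTr M := by
    intro k r M
    simp [rTr, Matrix.trace_smul, Complex.smul_re]
  have hrTr_blocks : ∀ (Sp : Mat npt npt) (Q : Mat npt nct) (Q' : Mat nct npt)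
      (Scp : Mat nct nct), rTr (fromBlocks Sp Q Q' Scp) = rTr Sp + rTr Scp := by
    intro Sp Q Q' Scp
    simp [rTr, aux_trace_fromBlocks]
  have hsmul3 : ∀ {k : ℕ} (A : Mat k nct) (S : Mat nct nct) (d : ℂ),
      A * (d • S) * Aᴴ = d • (A * S * Aᴴ) := by
    intro k A S d
    simp [Matrix.mul_smul, Matrix.smul_mul]
  clear_value c Dm Dm'
  ext R
  simp only [Set.mem_setOf_eq]
  constructor
  · rintro ⟨h1R, h2R, Qp, Scc, hQp, hScc, htr, hR1, hR2⟩
    refine ⟨h1R, h2R, ?_⟩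
    have hMpsd : (Dm' * Qp * Dm').PosSemidef := by
      have h := hQp.mul_mul_conjTranspose_same Dm'
      rwa [hD'herm] at h
    set M : Matrix (Fin npt ⊕ Fin nct) (Fin npt ⊕ Fin nct) ℂ := Dm' * Qp * Dm' with hMdef
    clear_value M
    have hQpM : Qp = Dm * M * Dm := by rw [hMdef, h2]
    have hMblocks : fromBlocks M.toBlocks₁₁ M.toBlocks₁₂ (M.toBlocks₁₂)ᴴ M.toBlocks₂₂ = M := by
      rw [← aux_toBlocks21 hMpsd.isHermitian, fromBlocks_toBlocks]
    refine ⟨M.toBlocks₁₁, M.toBlocks₂₂, (α : ℂ)⁻¹ • Scc, M.toBlocks₁₂,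
      aux_toBlocks11_psd hMpsd, aux_toBlocks22_psd hMpsd, ?_, hMblocks ▸ hMpsd, ?_, ?_, ?_⟩
    · have : ((α⁻¹ : ℝ) : ℂ) • Scc = (α : ℂ)⁻¹ • Scc := by push_cast; ring_nf
      rw [← this]
      exact aux_smul_psd hScc (by positivity)
    · have hQeq : Qp = fromBlocks M.toBlocks₁₁ (c • M.toBlocks₁₂) (c • (M.toBlocks₁₂)ᴴ)
          ((α : ℂ) • M.toBlocks₂₂) := by
        conv_lhs => rw [hQpM, ← hMblocks]
        rw [hDMD]
      have h3 : rTr Qp = rTr M.toBlocks₁₁ + α * rTr M.toBlocks₂₂ := by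
        rw [hQeq, hrTr_blocks, hrTr_smul]
      have h4 : rTr ((α : ℂ)⁻¹ • Scc) = α⁻¹ * rTr Scc := by
        have : ((α⁻¹ : ℝ) : ℂ) = (α : ℂ)⁻¹ := by push_cast; ring
        rw [← this, hrTr_smul]
      have := htr
      rw [h3] at this
      calc rTr M.toBlocks₁₁ + α * rTr M.toBlocks₂₂ + α * rTr ((α : ℂ)⁻¹ • Scc)
          = rTr M.toBlocks₁₁ + α * rTr M.toBlocks₂₂ + rTr Scc := by
            rw [h4]; field_simp
        _ ≤ Pp + α * Pc := this
    · have e1 : Gmat Hpp Hcp * fromBlocks M.toBlocks₁₁ M.toBlocks₁₂ (M.toBlocks₁₂)ᴴ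
          M.toBlocks₂₂ * (Gmat Hpp Hcp)ᴴ = Galpha Hpp Hcp α * Qp * (Galpha Hpp Hcp α)ᴴ := by
        rw [hMblocks, ← key, ← hQpM]
      have e2 : Hcp * ((α : ℂ)⁻¹ • Scc) * Hcpᴴ = (α : ℂ)⁻¹ • (Hcp * Scc * Hcpᴴ) := hsmul3 _ _ _
      rw [e1, e2]; exact hR1
    · have e3 : Hcc * ((α : ℂ)⁻¹ • Scc) * Hccᴴ = (α : ℂ)⁻¹ • (Hcc * Scc * Hccᴴ) := hsmul3 _ _ _
      rw [e3]; exact hR2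
  · rintro ⟨h1R, h2R, Sp, Scp, Scc, Q, hSp, hScp, hScc, hblk, htr, hR1, hR2⟩
    refine ⟨h1R, h2R, Dm * fromBlocks Sp Q Qᴴ Scp * Dm, (α : ℂ) • Scc, ?_, ?_, ?_, ?_, ?_⟩
    · have h := hblk.mul_mul_conjTranspose_same Dm
      rwa [hDherm] at h
    · exact aux_smul_psd hScc hsa
    · rw [hDMD, hrTr_blocks, hrTr_smul, hrTr_smul]
      linarith
    · have e1 : Galpha Hpp Hcp α * (Dm * fromBlocks Sp Q Qᴴ Scp * Dm) * (Galpha Hpp Hcp α)ᴴ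
          = Gmat Hpp Hcp * fromBlocks Sp Q Qᴴ Scp * (Gmat Hpp Hcp)ᴴ := key _
      have e2 : (α : ℂ)⁻¹ • (Hcp * ((α : ℂ) • Scc) * Hcpᴴ) = Hcp * Scc * Hcpᴴ := by
        rw [hsmul3, smul_smul, inv_mul_cancel₀ hαC, one_smul]
      rw [e1, e2]; exact hR1
    · have e3 : (α : ℂ)⁻¹ • (Hcc * ((α : ℂ) • Scc) * Hccᴴ) = Hcc * Scc * Hccᴴ := by
        rw [hsmul3, smul_smul, inv_mul_cancel₀ hαC, one_smul]
      rw [e3]; exact hR2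

end
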